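/- For all real x and y, the family ((m,n) ↦ (−1)^n·H_{m,n}(x)·y^{m+n}/(m!·n!)) indexed by ℕ × ℕ is summable, and its sum equals e^{x·y}. -/

import Mathlib

open Polynomial Finset

/-- The operator `A p = 2·X·p − p′`. -/
noncomputable def A (p : ℝ[X]) : ℝ[X] := 2 * X * p - derivative p

/-- The two-index Hermite polynomial `H_{m,n} = A^m (X^n)`. -/
noncomputable def H (m n : ℕ) : ℝ[X] := A^[m] (X ^ n)

lemma A_add (p q : ℝ[X]) : A (p + q) = A p + A q := by
  simp [A]; ring

lemma A_smul (c : ℝ) (p : ℝ[X]) : A (c • p) = c • A p := by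
  simp only [A, derivative_smul, smul_sub, mul_smul_comm]

lemma A_sub (p q : ℝ[X]) : A (p - q) = A p - A q := by
  simp [A]; ring

lemma A_iter_add (j : ℕ) (p q : ℝ[X]) : A^[j] (p + q) = A^[j] p + A^[j] q := by
  induction j generalizing p q with
  | zero => simp
  | succ k ih => simp [Function.iterate_succ_apply, A_add, ih]

lemma A_iter_sub (j : ℕ) (p q : ℝ[X]) : A^[j] (p - q) = A^[j] p - A^[j] q := by
  induction j generalizing p q with
  | zero => simp
  | succ k ih => simp [Function.iterate_succ_apply, A_sub, ih]

lemma A_iter_smul (j : ℕ) (c : ℝ) (p : ℝ[X]) : A^[j] (c • p) = c • A^[j] p := by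
  induction j generalizing p with
  | zero => simp
  | succ k ih => simp [Function.iterate_succ_apply, A_smul, ih]

lemma A_X_mul (p : ℝ[X]) : A (X * p) = X * A p - p := by
  simp [A]; ring

lemma A_iter_X_mul (j : ℕ) (p : ℝ[X]) :
    A^[j] (X * p) = X * A^[j] p - (j : ℝ) • A^[j - 1] p := by
  induction j generalizing p with
  | zero => simp
  | succ k ih =>
    cases k with
    | zero => simpa using A_X_mul p
    | succ l =>
      rw [Function.iterate_succ_apply, A_X_mul, A_iter_sub, ih (A p)]
      simp only [Nat.add_sub_cancel, ← Function.iterate_succ_apply A, Nat.succ_eq_add_one]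
      push_cast
      module

lemma A_zero : A 0 = 0 := by simp [A]

lemma A_sum {ι : Type*} (s : Finset ι) (f : ι → ℝ[X]) :
    A (∑ i ∈ s, f i) = ∑ i ∈ s, A (f i) := by
  induction s using Finset.cons_induction with
  | empty => simp [A_zero]
  | cons a s ha ih => simp [Finset.sum_cons, A_add, ih]

lemma key : ∀ N : ℕ,
    ∑ n ∈ range (N + 1), ((-1 : ℝ) ^ n * (N.choose n : ℝ)) • A^[N - n] (X ^ n) = X ^ N := by
  intro N
  induction N using Nat.strong_induction_on with
  | _ N ih =>
  match N with
  | 0 => simp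
  | 1 =>
    norm_num [Finset.sum_range_succ, A]
    ring
  | (N + 2) =>
    have ih1 := ih (N + 1) (by omega)
    have ih0 := ih N (by omega)
    rw [Finset.sum_range_succ']
    have split : ∀ k ∈ range (N + 2),
        ((-1 : ℝ) ^ (k+1) * ((N+2).choose (k+1) : ℝ)) • A^[N + 2 - (k+1)] (X ^ (k+1)) =
        (((-1 : ℝ) ^ (k+1) * ((N+1).choose k : ℝ)) • A^[N + 1 - k] (X * X ^ k)
          + ((-1 : ℝ) ^ (k+1) * ((N+1).choose (k+1) : ℝ)) • A^[N + 1 - k] (X ^ (k+1))) := by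
      intro k hk
      have h1 : N + 2 - (k + 1) = N + 1 - k := by omega
      rw [h1, Nat.choose_succ_succ, ← pow_succ' X k]
      push_cast
      rw [mul_add, add_smul]
    rw [Finset.sum_congr rfl split, Finset.sum_add_distrib]
    -- Piece B : second sum + the n = 0 term equals A (X^(N+1))
    have hB : (∑ k ∈ range (N + 2),
          ((-1 : ℝ) ^ (k+1) * ((N+1).choose (k+1) : ℝ)) • A^[N + 1 - k] (X ^ (k+1)))
        + ((-1 : ℝ) ^ 0 * ((N+2).choose 0 : ℝ)) • A^[N + 2 - 0] (X ^ 0)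
        = A (X ^ (N + 1)) := by
      have e0 : ((-1 : ℝ) ^ 0 * ((N+2).choose 0 : ℝ)) • A^[N + 2 - 0] (X ^ 0)
          = ((-1 : ℝ) ^ 0 * ((N+1).choose 0 : ℝ)) • A^[N + 2 - 0] (X ^ 0) := by norm_num
      have merge : (∑ k ∈ range (N + 2),
            ((-1 : ℝ) ^ (k+1) * ((N+1).choose (k+1) : ℝ)) • A^[N + 2 - (k+1)] (X ^ (k+1)))
          + ((-1 : ℝ) ^ 0 * ((N+1).choose 0 : ℝ)) • A^[N + 2 - 0] (X ^ 0)
          = ∑ n ∈ range (N + 3),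
            ((-1 : ℝ) ^ n * ((N+1).choose n : ℝ)) • A^[N + 2 - n] (X ^ n) :=
        (Finset.sum_range_succ'
          (fun n => ((-1 : ℝ) ^ n * ((N+1).choose n : ℝ)) • A^[N + 2 - n] (X ^ n)) (N+2)).symm
      have congr2 : ∀ k ∈ range (N + 2),
          ((-1 : ℝ) ^ (k+1) * ((N+1).choose (k+1) : ℝ)) • A^[N + 1 - k] (X ^ (k+1))
          = ((-1 : ℝ) ^ (k+1) * ((N+1).choose (k+1) : ℝ)) • A^[N + 2 - (k+1)] (X ^ (k+1)) := by
        intro k hk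
        congr 2
        omega
      rw [e0, Finset.sum_congr rfl congr2, merge, Finset.sum_range_succ]
      norm_num [Nat.choose_eq_zero_of_lt]
      have congr3 : ∀ n ∈ range (N + 2),
          ((-1 : ℝ) ^ n * ((N+1).choose n : ℝ)) • A^[N + 2 - n] (X ^ n)
          = A (((-1 : ℝ) ^ n * ((N+1).choose n : ℝ)) • A^[N + 1 - n] (X ^ n)) := by
        intro n hn
        rw [A_smul]
        congr 1
        have h : N + 2 - n = (N + 1 - n) + 1 := by
          simp only [Finset.mem_range] at hn; omega
        rw [h, Function.iterate_succ_apply']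
      rw [Finset.sum_congr rfl congr3, ← A_sum, ih1]
    rw [add_assoc, hB]
    have splitA : ∀ k ∈ range (N + 2),
        ((-1 : ℝ) ^ (k+1) * ((N+1).choose k : ℝ)) • A^[N + 1 - k] (X * X ^ k)
        = -(X * (((-1 : ℝ) ^ k * ((N+1).choose k : ℝ)) • A^[N + 1 - k] (X ^ k)))
          + (((N : ℝ) + 1) • (((-1 : ℝ) ^ k * (N.choose k : ℝ)) • A^[N - k] (X ^ k))) := by
      intro k hk
      have hidx : N + 1 - k - 1 = N - k := by omega
      rw [A_iter_X_mul, hidx]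
      have h3 : (N.choose k : ℝ[X]) * ((N : ℝ[X]) + 1)
          = ((N+1).choose k : ℝ[X]) * ((N + 1 - k : ℕ) : ℝ[X]) := by
        exact_mod_cast congrArg (Nat.cast (R := ℝ[X])) (Nat.choose_mul_succ_eq N k)
      simp only [Polynomial.smul_eq_C_mul, map_mul, map_pow, map_neg, map_one, map_natCast,
        map_add]
      linear_combination (-1 : ℝ[X]) ^ (k+1) * A^[N - k] (X ^ k) * h3
    rw [Finset.sum_congr rfl splitA, Finset.sum_add_distrib]
    have hA1 : (∑ k ∈ range (N + 2),
          -(X * (((-1 : ℝ) ^ k * ((N+1).choose k : ℝ)) • A^[N + 1 - k] (X ^ k))))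
        = -(X * X ^ (N + 1)) := by
      rw [Finset.sum_neg_distrib, ← Finset.mul_sum, ih1]
    have hA2 : (∑ k ∈ range (N + 2),
          ((N : ℝ) + 1) • (((-1 : ℝ) ^ k * (N.choose k : ℝ)) • A^[N - k] (X ^ k)))
        = ((N : ℝ) + 1) • (X ^ N : ℝ[X]) := by
      rw [← Finset.smul_sum, Finset.sum_range_succ]
      norm_num [Nat.choose_eq_zero_of_lt, ih0]
    rw [hA1, hA2, A]
    rw [derivative_X_pow]
    simp only [Polynomial.smul_eq_C_mul, map_add, map_natCast, map_one]
    push_cast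
    ring

lemma A_natDegree (p : ℝ[X]) : (A p).natDegree ≤ p.natDegree + 1 := by
  unfold A
  refine le_trans (natDegree_sub_le _ _) (max_le ?_ ?_)
  · calc (2 * X * p).natDegree ≤ (2 * X : ℝ[X]).natDegree + p.natDegree := natDegree_mul_le
    _ ≤ 1 + p.natDegree := by
        gcongr
        calc (2 * X : ℝ[X]).natDegree ≤ (2 : ℝ[X]).natDegree + X.natDegree := natDegree_mul_le
        _ ≤ 1 := by simp
    _ = p.natDegree + 1 := by omega
  · exact le_trans (natDegree_derivative_le p) (by omega)

lemma H_natDegree (m n : ℕ) : (H m n).natDegree ≤ m + n := by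
  induction m with
  | zero => simp [H]
  | succ k ih =>
    have : H (k+1) n = A (H k n) := Function.iterate_succ_apply' A k (X ^ n)
    rw [this]
    calc (A (H k n)).natDegree ≤ (H k n).natDegree + 1 := A_natDegree _
    _ ≤ k + n + 1 := by omega
    _ = (k+1) + n := by omega

lemma H_coeff_zero {m n i : ℕ} (h : m + n < i) : (H m n).coeff i = 0 :=
  coeff_eq_zero_of_natDegree_lt (lt_of_le_of_lt (H_natDegree m n) h)

lemma A_coeff_abs (p : ℝ[X]) (i : ℕ) :
    |(A p).coeff i| ≤ 2 * |p.coeff (i - 1)| + ((i : ℝ) + 1) * |p.coeff (i + 1)| := by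
  have h2 : (2 * X * p : ℝ[X]) = C 2 * (X * p) := by
    rw [mul_assoc, map_ofNat]
  cases i with
  | zero =>
    have : (A p).coeff 0 = -(p.coeff 1) := by
      simp [A, h2, coeff_derivative, mul_coeff_zero]
    rw [this]
    have h0 : (0:ℝ) ≤ 2 * |p.coeff (0-1)| := by positivity
    rw [abs_neg]
    nlinarith [abs_nonneg (p.coeff 1)]
  | succ j =>
    have hc : (A p).coeff (j+1) = 2 * p.coeff j - p.coeff (j+2) * ((j:ℝ)+1+1) := by
      rw [A, coeff_sub, h2, coeff_C_mul, coeff_X_mul, coeff_derivative]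
      push_cast; ring
    rw [hc]
    have hj : ((j:ℝ)+1+1) = ((j+1:ℕ):ℝ)+1 := by push_cast; ring
    calc |2 * p.coeff j - p.coeff (j+2) * ((j:ℝ)+1+1)|
        ≤ |2 * p.coeff j| + |p.coeff (j+2) * ((j:ℝ)+1+1)| := abs_sub _ _
      _ = 2 * |p.coeff j| + ((j:ℝ)+1+1) * |p.coeff (j+2)| := by
          rw [abs_mul, abs_mul, abs_two, abs_of_nonneg (by positivity : (0:ℝ) ≤ (j:ℝ)+1+1)]
          ring
      _ = 2 * |p.coeff ((j+1) - 1)| + (((j+1:ℕ):ℝ)+1) * |p.coeff ((j+1)+1)| := by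
          rw [← hj]
          norm_num

lemma A_coeff_zero (p : ℝ[X]) : (A p).coeff 0 = -(p.coeff 1) := by
  have h2 : (2 * X * p : ℝ[X]) = C 2 * (X * p) := by rw [mul_assoc, map_ofNat]
  simp [A, h2, coeff_derivative, mul_coeff_zero]

lemma H_coeff_bound : ∀ m n i, |(H m n).coeff i| * (i.factorial : ℝ)
    * ((((m + n) - i + 1) / 2).factorial : ℝ) ≤ 2 ^ m * ((m + n).factorial : ℝ) := by
  intro m
  induction m with
  | zero =>
    intro n i
    have h0 : H 0 n = X ^ n := rfl
    rw [h0]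
    simp only [coeff_X_pow, Nat.zero_add]
    by_cases h : i = n
    · subst h
      have hh : (i - i + 1) / 2 = 0 := by omega
      rw [if_pos rfl, hh]
      simp
    · rw [if_neg h]
      simp only [abs_zero, zero_mul]
      positivity
  | succ m IH =>
    intro n i
    have hH : H (m + 1) n = A (H m n) := Function.iterate_succ_apply' A m (X ^ n)
    rw [hH]
    have e0 : m + 1 + n = m + n + 1 := by omega
    rw [e0]
    rcases le_or_gt i (m + n + 1) with hi | hi
    swap
    · have hz : (A (H m n)).coeff i = 0 := by rw [← hH]; exact H_coeff_zero (by omega)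
      rw [hz]
      simp only [abs_zero, zero_mul]
      positivity
    rcases i with _ | j
    · -- i = 0
      rw [A_coeff_zero, abs_neg]
      rcases Nat.eq_zero_or_pos (m + n) with hN0 | hNpos
      · have hz : (H m n).coeff 1 = 0 := H_coeff_zero (by omega)
        rw [hz]
        simp only [abs_zero, zero_mul]
        positivity
      · have ih1 := IH n 1
        have hI : (m + n - 1 + 1) / 2 = (m + n) / 2 := by omega
        rw [hI, Nat.factorial_one] at ih1
        have hDeq : (m + n + 1 - 0 + 1) / 2 = (m + n) / 2 + 1 := by omega
        rw [hDeq, Nat.factorial_succ, Nat.factorial_zero]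
        have hc1 : (((m + n) / 2 : ℕ) : ℝ) + 1 ≤ 2 * (((m + n : ℕ) : ℝ) + 1) := by
          have h' : ((m + n) / 2 + 1 : ℕ) ≤ 2 * ((m + n) + 1) := by omega
          exact_mod_cast h'
        have h1 := mul_le_mul_of_nonneg_left ih1
          (show (0:ℝ) ≤ (((m + n) / 2 : ℕ) : ℝ) + 1 by positivity)
        have h2 := mul_le_mul_of_nonneg_right hc1
          (show (0:ℝ) ≤ 2 ^ m * (((m + n).factorial : ℕ) : ℝ) by positivity)
        push_cast [Nat.factorial_succ, pow_succ] at h1 h2 ⊢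
        nlinarith [h1, h2]
    · -- i = j + 1
      have habs := A_coeff_abs (H m n) (j + 1)
      simp only [Nat.add_sub_cancel] at habs
      push_cast at habs
      have key_a := IH n j
      have eD : (m + n + 1 - (j + 1) + 1) / 2 = (m + n - j + 1) / 2 := by omega
      rw [eD]
      by_cases hb : j + 2 ≤ m + n
      · have key_b := IH n (j + 2)
        have e2 : (m + n - j + 1) / 2 = (m + n - (j + 2) + 1) / 2 + 1 := by omega
        rw [e2, Nat.factorial_succ]
        rw [e2, Nat.factorial_succ] at key_a
        have hfin : ((((m + n - (j + 2) + 1) / 2 : ℕ) : ℝ) + 1) + 2 * ((j : ℝ) + 1)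
            ≤ 2 * (((m + n : ℕ) : ℝ) + 1) := by
          have h' : ((m + n - (j + 2) + 1) / 2 + 1) + 2 * (j + 1) ≤ 2 * ((m + n) + 1) := by omega
          exact_mod_cast h'
        have h1 := mul_le_mul_of_nonneg_right habs
          (show (0:ℝ) ≤ (((j+1).factorial : ℕ) : ℝ)
            * (((((m + n - (j + 2) + 1) / 2 : ℕ) : ℝ) + 1)
              * (((m + n - (j + 2) + 1) / 2).factorial : ℝ)) by positivity)
        have h2 := mul_le_mul_of_nonneg_left key_a
          (show (0:ℝ) ≤ 2 * ((j : ℝ) + 1) by positivity)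
        have h3 := mul_le_mul_of_nonneg_left key_b
          (show (0:ℝ) ≤ (((m + n - (j + 2) + 1) / 2 : ℕ) : ℝ) + 1 by positivity)
        have h4 := mul_le_mul_of_nonneg_right hfin
          (show (0:ℝ) ≤ 2 ^ m * (((m + n).factorial : ℕ) : ℝ) by positivity)
        push_cast [Nat.factorial_succ, pow_succ] at h1 h2 h3 h4 ⊢
        nlinarith [h1, h2, h3, h4]
      · have hz : (H m n).coeff (j + 2) = 0 := H_coeff_zero (by omega)
        rw [hz] at habs
        simp only [abs_zero, mul_zero, add_zero] at habs
        have hfin : 2 * ((j : ℝ) + 1) ≤ 2 * (((m + n : ℕ) : ℝ) + 1) := by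
          have h' : 2 * (j + 1) ≤ 2 * ((m + n) + 1) := by omega
          exact_mod_cast h'
        have h1 := mul_le_mul_of_nonneg_right habs
          (show (0:ℝ) ≤ (((j+1).factorial : ℕ) : ℝ)
            * ((((m + n - j + 1) / 2).factorial : ℕ) : ℝ) by positivity)
        have h2 := mul_le_mul_of_nonneg_left key_a
          (show (0:ℝ) ≤ 2 * ((j : ℝ) + 1) by positivity)
        have h4 := mul_le_mul_of_nonneg_right hfin
          (show (0:ℝ) ≤ 2 ^ m * (((m + n).factorial : ℕ) : ℝ) by positivity)
        push_cast [Nat.factorial_succ, pow_succ] at h1 h2 h4 ⊢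
        nlinarith [h1, h2, h4]

-- choose ≤ 2^n
lemma choose_le_two_pow' (n k : ℕ) : n.choose k ≤ 2 ^ n := by
  rcases le_or_gt k n with h | h
  · calc n.choose k ≤ ∑ i ∈ range (n + 1), n.choose i :=
        Finset.single_le_sum (fun i _ => Nat.zero_le _) (Finset.mem_range.mpr (by omega))
    _ = 2 ^ n := Nat.sum_range_choose n
  · rw [Nat.choose_eq_zero_of_lt h]; positivity

-- coefficient bound in division form with uniform denominator
lemma H_coeff_div_bound (m n i : ℕ) (h : i ≤ m + n) :
    |(H m n).coeff i| * (((m + n) / 2).factorial : ℝ)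
      ≤ 2 ^ m * ((m + n).factorial : ℝ) * 2 ^ (m + n + 1) := by
  have hb := H_coeff_bound m n i
  set N := m + n with hN
  set d := (N - i + 1) / 2 with hd
  -- ℕ fact : (N/2)! ≤ 2^(N+1) * i! * d!
  have hnat : (N / 2).factorial ≤ 2 ^ (N + 1) * (i.factorial * d.factorial) := by
    have h1 : N / 2 ≤ i + d := by omega
    have h2 : i + d ≤ N + 1 := by omega
    calc (N / 2).factorial ≤ (i + d).factorial := Nat.factorial_le h1
    _ = (i + d).choose i * (i.factorial * d.factorial) := by
        have := Nat.choose_mul_factorial_mul_factorial (Nat.le_add_right i d)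
        rw [Nat.add_sub_cancel_left] at this
        rw [← this]; ring
    _ ≤ 2 ^ (i + d) * (i.factorial * d.factorial) := by
        gcongr
        exact choose_le_two_pow' _ _
    _ ≤ 2 ^ (N + 1) * (i.factorial * d.factorial) := by
        gcongr <;> omega
  have hnat' : ((N / 2).factorial : ℝ) ≤ 2 ^ (N + 1) * ((i.factorial : ℝ) * (d.factorial : ℝ)) := by
    exact_mod_cast hnat
  have h1 := mul_le_mul_of_nonneg_left hnat' (abs_nonneg ((H m n).coeff i))
  have h2 := mul_le_mul_of_nonneg_left hb (show (0:ℝ) ≤ 2 ^ (N + 1) by positivity)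
  nlinarith [h1, h2]

-- evaluation bound
lemma H_eval_bound (m n : ℕ) (x : ℝ) (b : ℝ) (hb : 1 ≤ b) (hx : |x| ≤ b) :
    |(H m n).eval x| * (((m + n) / 2).factorial : ℝ)
      ≤ ((m : ℝ) + n + 1) * (2 ^ m * ((m + n).factorial : ℝ) * 2 ^ (m + n + 1) * b ^ (m + n)) := by
  have hdeg : (H m n).natDegree < (m + n) + 1 := Nat.lt_succ_of_le (H_natDegree m n)
  rw [Polynomial.eval_eq_sum_range' hdeg]
  calc |∑ i ∈ range ((m + n) + 1), (H m n).coeff i * x ^ i| * (((m + n) / 2).factorial : ℝ)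
      ≤ (∑ i ∈ range ((m + n) + 1), |(H m n).coeff i * x ^ i|) * (((m + n) / 2).factorial : ℝ) := by
        gcongr
        exact Finset.abs_sum_le_sum_abs _ _
    _ = ∑ i ∈ range ((m + n) + 1), |(H m n).coeff i| * |x| ^ i * (((m + n) / 2).factorial : ℝ) := by
        rw [Finset.sum_mul]
        refine Finset.sum_congr rfl fun i _ => ?_
        rw [abs_mul, abs_pow]
    _ ≤ ∑ i ∈ range ((m + n) + 1), 2 ^ m * (((m + n).factorial : ℕ) : ℝ) * 2 ^ ((m + n) + 1) * b ^ (m + n) := by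
        refine Finset.sum_le_sum fun i hi => ?_
        have hiN : i ≤ m + n := by simpa [Nat.lt_succ_iff] using hi
        have hxb : |x| ^ i ≤ b ^ (m + n) := by
          calc |x| ^ i ≤ b ^ i := pow_le_pow_left₀ (abs_nonneg x) hx i
          _ ≤ b ^ (m + n) := pow_le_pow_right₀ hb hiN
        have hc := H_coeff_div_bound m n i hiN
        have h1 : |(H m n).coeff i| * |x| ^ i * (((m + n) / 2).factorial : ℝ)
            = (|(H m n).coeff i| * (((m + n) / 2).factorial : ℝ)) * |x| ^ i := by ring
        rw [h1]
        calc (|(H m n).coeff i| * (((m + n) / 2).factorial : ℝ)) * |x| ^ i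
            ≤ (2 ^ m * (((m + n).factorial : ℕ) : ℝ) * 2 ^ ((m + n) + 1)) * b ^ (m + n) :=
              mul_le_mul hc hxb (by positivity) (by positivity)
          _ = 2 ^ m * (((m + n).factorial : ℕ) : ℝ) * 2 ^ ((m + n) + 1) * b ^ (m + n) := by ring
    _ = ((m : ℝ) + n + 1) * (2 ^ m * (((m + n).factorial : ℕ) : ℝ) * 2 ^ ((m + n) + 1) * b ^ (m + n)) := by
        rw [Finset.sum_const, Finset.card_range]
        push_cast
        ring

lemma term_bound (x y : ℝ) (m n : ℕ) :
    |(-1 : ℝ) ^ n * (H m n).eval x * y ^ (m + n) / ((m.factorial : ℝ) * (n.factorial : ℝ))|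
      ≤ 2 * ((m : ℝ) + n + 1) * (8 * max 1 |x| * max 1 |y|) ^ (m + n)
          / (((m + n) / 2).factorial : ℝ) := by
  set b := max 1 |x| with hbdef
  set Y := max 1 |y| with hYdef
  have hb : (1:ℝ) ≤ b := le_max_left _ _
  have hxb : |x| ≤ b := le_max_right _ _
  have hY : (1:ℝ) ≤ Y := le_max_left _ _
  have hyY : |y| ≤ Y := le_max_right _ _
  have hEval := H_eval_bound m n x b hb hxb
  have habs : |(-1 : ℝ) ^ n * (H m n).eval x * y ^ (m + n)
      / ((m.factorial : ℝ) * (n.factorial : ℝ))|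
      = |(H m n).eval x| * |y| ^ (m + n) / ((m.factorial : ℝ) * (n.factorial : ℝ)) := by
    rw [abs_div, abs_mul, abs_mul, abs_pow, abs_pow, abs_neg, abs_one, one_pow, one_mul,
      abs_mul, abs_of_nonneg (a := (m.factorial : ℝ)) (by positivity),
      abs_of_nonneg (a := (n.factorial : ℝ)) (by positivity)]
  rw [habs, div_le_div_iff₀ (by positivity) (by positivity)]
  -- goal : |eval| * |y|^N * F ≤ 2(N+1) c^N * (m! n!)
  have hNfac : ((m + n).factorial : ℝ) = ((m + n).choose n : ℝ)
      * ((n.factorial : ℝ) * (m.factorial : ℝ)) := by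
    have h := Nat.choose_mul_factorial_mul_factorial (Nat.le_add_left n m)
    have h2 : m + n - n = m := by omega
    rw [h2] at h
    have h3 := congrArg (Nat.cast (R := ℝ)) h.symm
    push_cast at h3
    rw [h3]; ring
  have hchoose : (((m + n).choose n : ℕ) : ℝ) ≤ 2 ^ (m + n) := by
    exact_mod_cast choose_le_two_pow' (m + n) n
  have h2m : (2:ℝ) ^ m ≤ 2 ^ (m + n) := by
    apply pow_le_pow_right₀ (by norm_num) (by omega)
  have hyN : |y| ^ (m + n) ≤ Y ^ (m + n) := pow_le_pow_left₀ (abs_nonneg y) hyY _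
  have key : |(H m n).eval x| * (((m + n) / 2).factorial : ℝ) * |y| ^ (m + n)
      ≤ ((m : ℝ) + n + 1) * (2 ^ m * ((m + n).factorial : ℝ) * 2 ^ (m + n + 1) * b ^ (m + n))
        * Y ^ (m + n) :=
    mul_le_mul hEval hyN (by positivity) (by positivity)
  have expand : ((m : ℝ) + n + 1) * (2 ^ m * ((m + n).factorial : ℝ) * 2 ^ (m + n + 1)
        * b ^ (m + n)) * Y ^ (m + n)
      ≤ 2 * ((m : ℝ) + n + 1) * (8 * b * Y) ^ (m + n) * ((m.factorial : ℝ) * (n.factorial : ℝ)) := by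
    rw [hNfac]
    have h8 : (8 * b * Y : ℝ) ^ (m + n)
        = (2:ℝ)^(m+n) * ((2:ℝ)^(m+n) * ((2:ℝ)^(m+n) * (b ^ (m+n) * Y ^ (m+n)))) := by
      rw [show (8 * b * Y : ℝ) = 2 * 2 * 2 * b * Y by norm_num]
      rw [mul_pow, mul_pow, mul_pow, mul_pow]
      ring
    rw [h8, pow_succ]
    have hfacpos : (0:ℝ) < (n.factorial : ℝ) * (m.factorial : ℝ) := by positivity
    have hb0 : (0:ℝ) ≤ b ^ (m+n) := by positivity
    have hY0 : (0:ℝ) ≤ Y ^ (m+n) := by positivity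
    have hcpos : (0:ℝ) ≤ ((m + n).choose n : ℝ) := by positivity
    nlinarith [mul_le_mul h2m hchoose hcpos (by positivity : (0:ℝ) ≤ (2:ℝ)^(m+n)),
      mul_pos hfacpos (by positivity : (0:ℝ) < ((m:ℝ)+n+1) * (2:ℝ)^(m+n) * 2),
      mul_nonneg hb0 hY0, hfacpos.le,
      mul_le_mul_of_nonneg_right (mul_le_mul h2m hchoose hcpos
          (by positivity : (0:ℝ) ≤ (2:ℝ)^(m+n)))
        (by positivity : (0:ℝ) ≤ ((m:ℝ)+n+1) * 2 * (b^(m+n) * Y^(m+n))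
            * ((n.factorial : ℝ) * (m.factorial : ℝ)) * 2^(m+n))]
  calc |(H m n).eval x| * |y| ^ (m + n) * (((m + n) / 2).factorial : ℝ)
      = |(H m n).eval x| * (((m + n) / 2).factorial : ℝ) * |y| ^ (m + n) := by ring
    _ ≤ ((m : ℝ) + n + 1) * (2 ^ m * ((m + n).factorial : ℝ) * 2 ^ (m + n + 1) * b ^ (m + n))
        * Y ^ (m + n) := key
    _ ≤ 2 * ((m : ℝ) + n + 1) * (8 * b * Y) ^ (m + n)
        * ((m.factorial : ℝ) * (n.factorial : ℝ)) := expand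

lemma u_summable {c : ℝ} (hc : 1 ≤ c) :
    Summable (fun k : ℕ => 2 * ((k : ℝ) + 1) * c ^ k / ((k / 2).factorial : ℝ)) := by
  have hc0 : (0:ℝ) < c := lt_of_lt_of_le one_pos hc
  have hv : Summable (fun r : ℕ => 8 * c * ((2 * c ^ 2) ^ r / (r.factorial : ℝ))) :=
    (Real.summable_pow_div_factorial (2 * c ^ 2)).mul_left (8 * c)
  have hvnn : ∀ r : ℕ, 0 ≤ 8 * c * ((2 * c ^ 2) ^ r / (r.factorial : ℝ)) := by
    intro r; positivity
  have hdouble : ∀ K : ℕ, ∑ k ∈ range (2 * K), 8 * c * ((2 * c ^ 2) ^ (k / 2) / (((k / 2).factorial : ℕ) : ℝ))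
      = 2 * ∑ r ∈ range K, 8 * c * ((2 * c ^ 2) ^ r / ((r.factorial : ℕ) : ℝ)) := by
    intro K
    induction K with
    | zero => simp
    | succ K ih =>
      rw [show 2 * (K + 1) = (2 * K) + 1 + 1 by omega, Finset.sum_range_succ,
        Finset.sum_range_succ, ih, Finset.sum_range_succ]
      rw [show (2 * K) / 2 = K by omega, show (2 * K + 1) / 2 = K by omega]
      ring
  -- summability of k ↦ v (k / 2)
  have hvc : Summable (fun k : ℕ => 8 * c * ((2 * c ^ 2) ^ (k / 2) / (((k / 2).factorial : ℕ) : ℝ))) := by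
    apply summable_of_sum_range_le (c := 2 * ∑' r : ℕ, 8 * c * ((2 * c ^ 2) ^ r / ((r.factorial : ℕ) : ℝ)))
      (fun k => by positivity)
    intro K
    calc ∑ k ∈ range K, 8 * c * ((2 * c ^ 2) ^ (k / 2) / (((k / 2).factorial : ℕ) : ℝ))
        ≤ ∑ k ∈ range (2 * K), 8 * c * ((2 * c ^ 2) ^ (k / 2) / (((k / 2).factorial : ℕ) : ℝ)) := by
          apply Finset.sum_le_sum_of_subset_of_nonneg
          · apply Finset.range_subset_range.mpr; omega
          · intro k _ _; positivity
      _ = 2 * ∑ r ∈ range K, 8 * c * ((2 * c ^ 2) ^ r / ((r.factorial : ℕ) : ℝ)) := hdouble K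
      _ ≤ 2 * ∑' r : ℕ, 8 * c * ((2 * c ^ 2) ^ r / ((r.factorial : ℕ) : ℝ)) := by
          gcongr
          exact Summable.sum_le_tsum (range K) (fun r _ => hvnn r) hv
  apply Summable.of_nonneg_of_le (fun k => by positivity) _ hvc
  intro k
  -- 2 (k+1) c^k / (k/2)! ≤ 8 c (2 c^2)^(k/2) / (k/2)!
  set r := k / 2 with hr
  have hkr : k ≤ 2 * r + 1 := by omega
  have hck : c ^ k ≤ (c ^ 2) ^ r * c := by
    calc c ^ k ≤ c ^ (2 * r + 1) := pow_le_pow_right₀ hc hkr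
    _ = (c ^ 2) ^ r * c := by rw [pow_succ, pow_mul]
  have hk1 : ((k : ℝ) + 1) ≤ 2 * 2 ^ r := by
    have h1 : k + 1 ≤ 2 * (r + 1) := by omega
    have h2 : r + 1 ≤ 2 ^ r := Nat.lt_two_pow_self (n := r)
    have h3 : (k : ℝ) + 1 ≤ 2 * ((r : ℝ) + 1) := by exact_mod_cast h1
    have h4 : ((r : ℝ) + 1) ≤ 2 ^ r := by exact_mod_cast h2
    linarith
  rw [mul_div_assoc']
  gcongr ?_ / _
  calc 2 * ((k : ℝ) + 1) * c ^ k ≤ 2 * (2 * 2 ^ r) * ((c ^ 2) ^ r * c) := by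
        have := mul_le_mul hk1 hck (by positivity) (by positivity)
        nlinarith [this]
    _ ≤ 8 * c * (2 * c ^ 2) ^ r := by
        rw [mul_pow]
        have hP : (0:ℝ) < 2 ^ r * ((c ^ 2) ^ r * c) := by positivity
        nlinarith [hP]

lemma eval_key (x : ℝ) (N : ℕ) :
    ∑ n ∈ range (N + 1), (-1 : ℝ) ^ n * (N.choose n : ℝ) * (H (N - n) n).eval x = x ^ N := by
  have h := congrArg (Polynomial.eval x) (key N)
  rw [Polynomial.eval_finset_sum, Polynomial.eval_pow, Polynomial.eval_X] at h
  rw [← h]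
  refine Finset.sum_congr rfl fun n hn => ?_
  rw [Polynomial.eval_smul]
  simp [H, smul_eq_mul]

lemma eval_key' (x : ℝ) (N : ℕ) :
    ∑ k ∈ range (N + 1), (-1 : ℝ) ^ (N - k) * (N.choose k : ℝ) * (H k (N - k)).eval x
      = x ^ N := by
  rw [← eval_key x N]
  refine (Finset.sum_congr rfl fun k hk => ?_).trans
    (Finset.sum_range_reflect
      (fun n => (-1 : ℝ) ^ n * (N.choose n : ℝ) * (H (N - n) n).eval x) (N + 1))
  have hkN : k ≤ N := by simpa [Nat.lt_succ_iff] using hk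
  have h1 : N + 1 - 1 - k = N - k := by omega
  have h2 : N - (N - k) = k := by omega
  rw [h1, h2, Nat.choose_symm hkN]

lemma diag_sum (x y : ℝ) (N : ℕ) :
    ∑ p ∈ Finset.HasAntidiagonal.antidiagonal N,
      (-1 : ℝ) ^ p.2 * (H p.1 p.2).eval x * y ^ (p.1 + p.2)
        / ((p.1.factorial : ℝ) * (p.2.factorial : ℝ))
      = (x * y) ^ N / (N.factorial : ℝ) := by
  rw [Finset.Nat.sum_antidiagonal_eq_sum_range_succ_mk]
  have hcongr : ∀ k ∈ range (N + 1),
      (-1 : ℝ) ^ (N - k) * (H k (N - k)).eval x * y ^ (k + (N - k))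
        / ((k.factorial : ℝ) * ((N - k).factorial : ℝ))
      = ((-1 : ℝ) ^ (N - k) * (N.choose k : ℝ) * (H k (N - k)).eval x)
          * (y ^ N / (N.factorial : ℝ)) := by
    intro k hk
    have hkN : k ≤ N := by simpa [Nat.lt_succ_iff] using hk
    have hkk : k + (N - k) = N := by omega
    rw [hkk]
    have hfac0 := congrArg (Nat.cast (R := ℝ)) (Nat.choose_mul_factorial_mul_factorial hkN)
    push_cast at hfac0
    have hk0 : (k.factorial : ℝ) ≠ 0 := by positivity
    have hNk0 : (((N - k).factorial : ℕ) : ℝ) ≠ 0 := by positivity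
    have hN0 : ((N.factorial : ℕ) : ℝ) ≠ 0 := by positivity
    field_simp
    rw [← hfac0]
    ring
  rw [Finset.sum_congr rfl hcongr, ← Finset.sum_mul, eval_key' x N, mul_pow]
  ring

set_option maxHeartbeats 2000000 in
theorem hmn_exp_expansion (x y : ℝ) :
    Summable (fun p : ℕ × ℕ =>
      (-1 : ℝ) ^ p.2 * (H p.1 p.2).eval x * y ^ (p.1 + p.2) /
        ((p.1.factorial : ℝ) * (p.2.factorial : ℝ))) ∧
    ∑' p : ℕ × ℕ,
      (-1 : ℝ) ^ p.2 * (H p.1 p.2).eval x * y ^ (p.1 + p.2) /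
        ((p.1.factorial : ℝ) * (p.2.factorial : ℝ)) =
      Real.exp (x * y) := by
  obtain ⟨c, hceq, hc1⟩ : ∃ c : ℝ, 8 * max 1 |x| * max 1 |y| = c ∧ 1 ≤ c :=
    ⟨_, rfl, by nlinarith [le_max_left 1 |x|, le_max_left 1 |y|]⟩
  have hu := u_summable hc1
  have huprod : Summable (fun p : ℕ × ℕ =>
      (2 * ((p.1 : ℝ) + 1) * c ^ p.1 / ((p.1 / 2).factorial : ℝ))
        * (2 * ((p.2 : ℝ) + 1) * c ^ p.2 / ((p.2 / 2).factorial : ℝ))) :=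
    hu.mul_of_nonneg hu (fun k => by positivity) (fun k => by positivity)
  have hbound : ∀ p : ℕ × ℕ,
      ‖(-1 : ℝ) ^ p.2 * (H p.1 p.2).eval x * y ^ (p.1 + p.2) /
        ((p.1.factorial : ℝ) * (p.2.factorial : ℝ))‖
      ≤ (2 * ((p.1 : ℝ) + 1) * c ^ p.1 / ((p.1 / 2).factorial : ℝ))
        * (2 * ((p.2 : ℝ) + 1) * c ^ p.2 / ((p.2 / 2).factorial : ℝ)) := by
    rintro ⟨m, n⟩
    rw [Real.norm_eq_abs]
    have tb := term_bound x y m n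
    rw [hceq] at tb
    refine tb.trans ?_
    have hdenom : ((m / 2).factorial * (n / 2).factorial : ℕ) ≤ ((m + n) / 2).factorial := by
      calc (m / 2).factorial * (n / 2).factorial ≤ (m / 2 + n / 2).factorial :=
            Nat.le_of_dvd (Nat.factorial_pos _) (Nat.factorial_mul_factorial_dvd_factorial_add _ _)
        _ ≤ ((m + n) / 2).factorial := Nat.factorial_le (by omega)
    have hdenomR : ((m / 2).factorial : ℝ) * ((n / 2).factorial : ℝ)
        ≤ (((m + n) / 2).factorial : ℝ) := by exact_mod_cast hdenom
    have hnum : 2 * ((m : ℝ) + n + 1) * c ^ (m + n)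
        ≤ (2 * ((m : ℝ) + 1) * c ^ m) * (2 * ((n : ℝ) + 1) * c ^ n) := by
      rw [pow_add]
      have hcm : (0:ℝ) < c ^ m := pow_pos (by linarith) m
      have hcn : (0:ℝ) < c ^ n := pow_pos (by linarith) n
      have hmn : 2 * ((m : ℝ) + n + 1) ≤ 4 * ((m : ℝ) + 1) * ((n : ℝ) + 1) := by
        have hm0 : (0:ℝ) ≤ (m : ℝ) := Nat.cast_nonneg m
        have hn0 : (0:ℝ) ≤ (n : ℝ) := Nat.cast_nonneg n
        nlinarith
      nlinarith [mul_pos hcm hcn, mul_le_mul_of_nonneg_right hmn (mul_pos hcm hcn).le]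
    calc 2 * ((m : ℝ) + n + 1) * c ^ (m + n) / (((m + n) / 2).factorial : ℝ)
        ≤ 2 * ((m : ℝ) + n + 1) * c ^ (m + n)
            / (((m / 2).factorial : ℝ) * ((n / 2).factorial : ℝ)) := by
          gcongr
      _ ≤ (2 * ((m : ℝ) + 1) * c ^ m) * (2 * ((n : ℝ) + 1) * c ^ n)
            / (((m / 2).factorial : ℝ) * ((n / 2).factorial : ℝ)) := by
          gcongr
      _ = (2 * ((m : ℝ) + 1) * c ^ m / ((m / 2).factorial : ℝ))
            * (2 * ((n : ℝ) + 1) * c ^ n / ((n / 2).factorial : ℝ)) := by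
          field_simp
  have hsum : Summable (fun p : ℕ × ℕ =>
      (-1 : ℝ) ^ p.2 * (H p.1 p.2).eval x * y ^ (p.1 + p.2) /
        ((p.1.factorial : ℝ) * (p.2.factorial : ℝ))) :=
    Summable.of_norm_bounded huprod hbound
  refine ⟨hsum, ?_⟩
  have hs2 : Summable ((fun p : ℕ × ℕ =>
      (-1 : ℝ) ^ p.2 * (H p.1 p.2).eval x * y ^ (p.1 + p.2) /
        ((p.1.factorial : ℝ) * (p.2.factorial : ℝ)))
      ∘ (Finset.HasAntidiagonal.sigmaAntidiagonalEquivProd (A := ℕ))) :=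
    Finset.HasAntidiagonal.sigmaAntidiagonalEquivProd.summable_iff.mpr hsum
  have hinner : ∀ N : ℕ,
      (∑' (r : (Finset.HasAntidiagonal.antidiagonal N : Finset (ℕ × ℕ))),
        ((fun p : ℕ × ℕ =>
          (-1 : ℝ) ^ p.2 * (H p.1 p.2).eval x * y ^ (p.1 + p.2) /
            ((p.1.factorial : ℝ) * (p.2.factorial : ℝ)))
          ∘ (Finset.HasAntidiagonal.sigmaAntidiagonalEquivProd (A := ℕ))) ⟨N, r⟩)
      = (x * y) ^ N / (N.factorial : ℝ) := by
    intro N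
    rw [tsum_fintype]
    exact (Finset.sum_finset_coe _ _).trans (diag_sum x y N)
  calc (∑' p : ℕ × ℕ,
        (-1 : ℝ) ^ p.2 * (H p.1 p.2).eval x * y ^ (p.1 + p.2) /
          ((p.1.factorial : ℝ) * (p.2.factorial : ℝ)))
      = ∑' (q : Σ N : ℕ, (Finset.HasAntidiagonal.antidiagonal N : Finset (ℕ × ℕ))),
          ((fun p : ℕ × ℕ =>
            (-1 : ℝ) ^ p.2 * (H p.1 p.2).eval x * y ^ (p.1 + p.2) /
              ((p.1.factorial : ℝ) * (p.2.factorial : ℝ)))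
            ∘ (Finset.HasAntidiagonal.sigmaAntidiagonalEquivProd (A := ℕ))) q :=
        (Finset.HasAntidiagonal.sigmaAntidiagonalEquivProd.tsum_eq _).symm
    _ = ∑' (N : ℕ), ∑' (r : (Finset.HasAntidiagonal.antidiagonal N : Finset (ℕ × ℕ))),
          ((fun p : ℕ × ℕ =>
            (-1 : ℝ) ^ p.2 * (H p.1 p.2).eval x * y ^ (p.1 + p.2) /
              ((p.1.factorial : ℝ) * (p.2.factorial : ℝ)))
            ∘ (Finset.HasAntidiagonal.sigmaAntidiagonalEquivProd (A := ℕ))) ⟨N, r⟩ := Summable.tsum_sigma hs2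
    _ = ∑' (N : ℕ), (x * y) ^ N / (N.factorial : ℝ) := tsum_congr hinner
    _ = Real.exp (x * y) := by
        rw [Real.exp_eq_exp_ℝ, NormedSpace.exp_eq_tsum_div]
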